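/- For every minimal set cover C of a finite set V, one can construct a split graph G on vertex set V with an S-max KS-partition, where S is a choice of one loyal vertex from each set of C, K = V − S, and uv is an edge iff u and v lie together in some set of C or both lie in K; conversely, from any split graph G with S-max KS-partition, the collection {N(s) ∪ {s} : s ∈ S} is a minimal set cover of V(G). These constructions are mutually inverse, giving a bijection between (isomorphism classes of) split graphs on n vertices and (isomorphism classes of) minimal set covers of an n-set. -/

import Mathlib

open SimpleGraph
attribute [local instance] Classical.propDecidable

variable {V : Type*} [Fintype V] [DecidableEq V]

/-- A set of vertices is stable (independent) if no two of its elements are adjacent. -/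
def IsStableSet (G : SimpleGraph V) (s : Set V) : Prop :=
  s.Pairwise fun a b => ¬ G.Adj a b

/-- The clique number ω(G). -/
noncomputable def omegaNum (G : SimpleGraph V) : ℕ :=
  Finset.univ.sup fun s : Finset V => if G.IsClique (s : Set V) then s.card else 0

/-- The independence number α(G). -/
noncomputable def alphaNum (G : SimpleGraph V) : ℕ :=
  Finset.univ.sup fun s : Finset V => if IsStableSet G (s : Set V) then s.card else 0

/-- A KS-partition of `G`: a partition of the vertex set into a clique `K` and a stable set `S`. -/
def IsKSPartition (G : SimpleGraph V) (K S : Finset V) : Prop :=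
  Disjoint K S ∧ K ∪ S = Finset.univ ∧ G.IsClique (K : Set V) ∧ IsStableSet G (S : Set V)

/-- `G` is a split graph. -/
def IsSplit (G : SimpleGraph V) : Prop := ∃ K S : Finset V, IsKSPartition G K S

/-- A split graph is balanced if it has a KS-partition with `|K| = ω(G)` and `|S| = α(G)`. -/
def IsBalanced (G : SimpleGraph V) : Prop :=
  ∃ K S : Finset V, IsKSPartition G K S ∧ K.card = omegaNum G ∧ S.card = alphaNum G

/-- `C` is a set cover of the finite type `V`: the union of its members is all of `V`. -/
def IsSetCover {V : Type*} [Fintype V] (C : Finset (Finset V)) : Prop :=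
  ∀ v : V, ∃ A ∈ C, v ∈ A

/-- A set cover is minimal if no member is contained in the union of the remaining members. -/
def IsMinimalCover {V : Type*} [DecidableEq V] (C : Finset (Finset V)) : Prop :=
  ∀ A ∈ C, ¬ A ⊆ (C.erase A).sup id

/-- A vertex is loyal if it belongs to exactly one member of `C`. -/
def Loyal {V : Type*} (C : Finset (Finset V)) (v : V) : Prop :=
  ∃! A : Finset V, A ∈ C ∧ v ∈ A

/-- Isomorphism of split graphs on `Fin n`. -/
def SplitIsoRel (n : ℕ) (G H : {G : SimpleGraph (Fin n) // IsSplit G}) : Prop :=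
  Nonempty (G.1 ≃g H.1)

/-- Isomorphism of minimal set covers on `Fin n`: a permutation of the ground set
carrying one collection onto the other. -/
def CoverIsoRel (n : ℕ)
    (C D : {C : Finset (Finset (Fin n)) // IsSetCover C ∧ IsMinimalCover C}) : Prop :=
  ∃ σ : Equiv.Perm (Fin n), C.1.image (fun A => A.image σ) = D.1

/- ### auxiliary development -/

/-- adjacency relation of the graph built from a cover `C` and a transversal `S`. -/
def coverGraph (C : Finset (Finset V)) (S : Finset V) : SimpleGraph V where
  Adj u v := u ≠ v ∧ ((∃ A ∈ C, u ∈ A ∧ v ∈ A) ∨ (u ∉ S ∧ v ∉ S))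
  symm := by
    constructor
    rintro u v ⟨h1, h2⟩
    refine ⟨Ne.symm h1, ?_⟩
    rcases h2 with ⟨A, hA, hu, hv⟩ | ⟨hu, hv⟩
    · exact Or.inl ⟨A, hA, hv, hu⟩
    · exact Or.inr ⟨hv, hu⟩
  loopless := by constructor; intro v h; exact h.1 rfl

lemma coverGraph_adj {C : Finset (Finset V)} {S : Finset V} {u v : V} :
    (coverGraph C S).Adj u v ↔
      u ≠ v ∧ ((∃ A ∈ C, u ∈ A ∧ v ∈ A) ∨ (u ∉ S ∧ v ∉ S)) := Iff.rfl

/-- a system of distinct representatives of loyal vertices. -/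
def IsTransversal (C : Finset (Finset V)) (S : Finset V) : Prop :=
  (∀ s ∈ S, Loyal C s) ∧ (∀ A ∈ C, ∃! s, s ∈ S ∧ s ∈ A)

noncomputable def closedNbhd (G : SimpleGraph V) (s : V) : Finset V :=
  insert s (Finset.univ.filter fun v => G.Adj s v)

lemma mem_closedNbhd {G : SimpleGraph V} {s v : V} :
    v ∈ closedNbhd G s ↔ v = s ∨ G.Adj s v := by
  simp [closedNbhd]

noncomputable def graphCover (G : SimpleGraph V) (S : Finset V) : Finset (Finset V) :=
  S.image (closedNbhd G)

lemma stable_card_le_alpha {G : SimpleGraph V} {T : Finset V}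
    (h : IsStableSet G (T : Set V)) : T.card ≤ alphaNum G := by
  calc T.card = (fun s : Finset V => if IsStableSet G (s : Set V) then s.card else 0) T := by
        simp [h]
    _ ≤ alphaNum G := by
      unfold alphaNum
      exact Finset.le_sup (f := fun s : Finset V => if IsStableSet G (s : Set V) then s.card else 0) (Finset.mem_univ T)

lemma alpha_le {G : SimpleGraph V} {m : ℕ}
    (h : ∀ T : Finset V, IsStableSet G (T : Set V) → T.card ≤ m) : alphaNum G ≤ m := by
  refine Finset.sup_le fun T _ => ?_
  split_ifs with hT
  · exact h T hT
  · exact Nat.zero_le m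

lemma exists_max_stable (G : SimpleGraph V) :
    ∃ T : Finset V, IsStableSet G (T : Set V) ∧ T.card = alphaNum G := by
  obtain ⟨T, -, hT⟩ := Finset.exists_mem_eq_sup Finset.univ ⟨∅, Finset.mem_univ ∅⟩
    (fun s : Finset V => if IsStableSet G (s : Set V) then s.card else 0)
  by_cases h : IsStableSet G (T : Set V)
  · exact ⟨T, h, by rw [alphaNum, hT, if_pos h]⟩
  · refine ⟨∅, by simp [IsStableSet], ?_⟩
    rw [alphaNum, hT, if_neg h]; simp

lemma stable_inter_clique {G : SimpleGraph V} {T K : Finset V}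
    (hT : IsStableSet G (T : Set V)) (hK : G.IsClique (K : Set V)) :
    (T ∩ K).card ≤ 1 := by
  refine Finset.card_le_one.2 fun a ha b hb => ?_
  by_contra hne
  rw [Finset.mem_inter] at ha hb
  exact hT (by exact_mod_cast ha.1) (by exact_mod_cast hb.1) hne (hK (by exact_mod_cast ha.2) (by exact_mod_cast hb.2) hne)


lemma exists_transversal {C : Finset (Finset V)} (hC : IsSetCover C) (hm : IsMinimalCover C) :
    ∃ S : Finset V, IsTransversal C S := by
  -- pick, for each A ∈ C, an element of A not in any other member
  have hpick : ∀ A ∈ C, ∃ v, v ∈ A ∧ ∀ B ∈ C, v ∈ B → B = A := by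
    intro A hA
    have := hm A hA
    rw [Finset.not_subset] at this
    obtain ⟨v, hvA, hv⟩ := this
    refine ⟨v, hvA, fun B hB hvB => ?_⟩
    by_contra hne
    exact hv (Finset.le_sup (f := id) (Finset.mem_erase.2 ⟨hne, hB⟩) hvB)
  classical
  choose f hf1 hf2 using hpick
  refine ⟨C.attach.image (fun A => f A.1 A.2), ?_, ?_⟩
  · intro s hs
    obtain ⟨⟨A, hA⟩, -, rfl⟩ := Finset.mem_image.1 hs
    exact ⟨A, ⟨hA, hf1 A hA⟩, fun B hB => hf2 A hA B hB.1 hB.2⟩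
  · intro A hA
    refine ⟨f A hA, ⟨Finset.mem_image.2 ⟨⟨A, hA⟩, Finset.mem_attach _ _, rfl⟩, hf1 A hA⟩, ?_⟩
    rintro s ⟨hs, hsA⟩
    obtain ⟨⟨B, hB⟩, -, rfl⟩ := Finset.mem_image.1 hs
    have hBA : A = B := hf2 B hB A hA hsA
    subst hBA; rfl

lemma transversal_stable {C : Finset (Finset V)} {S : Finset V} (hS : IsTransversal C S) :
    IsStableSet (coverGraph C S) (S : Set V) := by
  rintro u hu v hv hne ⟨-, h⟩
  rcases h with ⟨A, hA, huA, hvA⟩ | ⟨hu', -⟩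
  · obtain ⟨s₀, -, huniq⟩ := hS.2 A hA
    exact hne ((huniq u ⟨hu, huA⟩).trans (huniq v ⟨hv, hvA⟩).symm)
  · exact hu' hu

lemma coverGraph_partition {C : Finset (Finset V)} {S : Finset V} (hS : IsTransversal C S) :
    IsKSPartition (coverGraph C S) (Finset.univ \ S) S := by
  refine ⟨Finset.sdiff_disjoint, Finset.sdiff_union_of_subset (Finset.subset_univ S), ?_,
    transversal_stable hS⟩
  intro u hu v hv hne
  simp only [Finset.coe_sdiff, Finset.coe_univ, Set.mem_diff] at hu hv
  exact ⟨hne, Or.inr ⟨fun h => hu.2 h, fun h => hv.2 h⟩⟩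

lemma transversal_card {C : Finset (Finset V)} {S : Finset V} (hS : IsTransversal C S) :
    S.card = C.card := by
  classical
  choose m hm1 hm2 using fun s (hs : s ∈ S) => (hS.1 s hs)
  refine Finset.card_bij (fun s hs => m s hs) (fun s hs => (hm1 s hs).1) ?_ ?_
  · intro a ha b hb hab
    change m a ha = m b hb at hab
    obtain ⟨s₀, -, huniq⟩ := hS.2 (m a ha) (hm1 a ha).1
    refine (huniq a ⟨ha, (hm1 a ha).2⟩).trans (huniq b ⟨hb, by rw [hab]; exact (hm1 b hb).2⟩).symm
  · intro A hA
    obtain ⟨s, ⟨hsS, hsA⟩, -⟩ := hS.2 A hA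
    exact ⟨s, hsS, (hm2 s hsS A ⟨hA, hsA⟩).symm⟩

lemma coverGraph_alpha {C : Finset (Finset V)} {S : Finset V} (hC : IsSetCover C)
    (hS : IsTransversal C S) : S.card = alphaNum (coverGraph C S) := by
  refine le_antisymm (stable_card_le_alpha (transversal_stable hS)) ?_
  rw [transversal_card hS]
  refine alpha_le fun T hT => ?_
  classical
  choose g hg1 hg2 using fun v : V => hC v
  refine Finset.card_le_card_of_injOn g (fun v _ => hg1 v) ?_
  intro a ha b hb hab
  by_contra hne
  exact hT (by exact_mod_cast ha) (by exact_mod_cast hb) hne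
    ⟨hne, Or.inl ⟨g a, hg1 a, hg2 a, by rw [hab]; exact hg2 b⟩⟩

lemma coverGraph_closedNbhd {C : Finset (Finset V)} {S : Finset V} (hS : IsTransversal C S)
    {s : V} (hs : s ∈ S) {A : Finset V} (hA : A ∈ C) (hsA : s ∈ A) :
    closedNbhd (coverGraph C S) s = A := by
  obtain ⟨A₀, hA₀, huniq⟩ := hS.1 s hs
  have hAA₀ : A = A₀ := huniq A ⟨hA, hsA⟩
  subst hAA₀
  ext v
  rw [mem_closedNbhd, coverGraph_adj]
  constructor
  · rintro (rfl | ⟨-, ⟨B, hB, hsB, hvB⟩ | ⟨hs', -⟩⟩)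
    · exact hsA
    · rwa [huniq B ⟨hB, hsB⟩] at hvB
    · exact absurd hs hs'
  · intro hv
    by_cases hvs : v = s
    · exact Or.inl hvs
    · exact Or.inr ⟨Ne.symm hvs, Or.inl ⟨A, hA, hsA, hv⟩⟩

lemma coverGraph_cover {C : Finset (Finset V)} {S : Finset V} (hS : IsTransversal C S) :
    graphCover (coverGraph C S) S = C := by
  ext A
  rw [graphCover, Finset.mem_image]
  constructor
  · rintro ⟨s, hs, rfl⟩
    obtain ⟨A₀, ⟨hA₀, hsA₀⟩, -⟩ := hS.1 s hs
    rw [coverGraph_closedNbhd hS hs hA₀ hsA₀]; exact hA₀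
  · intro hA
    obtain ⟨s, ⟨hsS, hsA⟩, -⟩ := hS.2 A hA
    exact ⟨s, hsS, coverGraph_closedNbhd hS hsS hA hsA⟩


lemma ks_K_eq {G : SimpleGraph V} {K S : Finset V} (h : IsKSPartition G K S) :
    K = Finset.univ \ S := by
  ext v
  simp only [Finset.mem_sdiff, Finset.mem_univ, true_and]
  constructor
  · intro hv hvS
    exact Finset.disjoint_left.1 h.1 hv hvS
  · intro hv
    have := h.2.1
    have hv2 : v ∈ K ∪ S := by rw [this]; exact Finset.mem_univ v
    rcases Finset.mem_union.1 hv2 with h' | h'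
    · exact h'
    · exact absurd h' hv

lemma mem_closedNbhd_self {G : SimpleGraph V} (s : V) : s ∈ closedNbhd G s :=
  mem_closedNbhd.2 (Or.inl rfl)

lemma stable_mem_closedNbhd {G : SimpleGraph V} {S : Finset V}
    (hst : IsStableSet G (S : Set V)) {s t : V} (hs : s ∈ S) (ht : t ∈ S)
    (h : t ∈ closedNbhd G s) : t = s := by
  rcases mem_closedNbhd.1 h with h' | h'
  · exact h'
  · exact absurd h' (fun hadj => hst (by exact_mod_cast hs) (by exact_mod_cast ht)
      (G.ne_of_adj h') h')

lemma graphCover_isSetCover {G : SimpleGraph V} {K S : Finset V}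
    (h : IsKSPartition G K S) (hmax : S.card = alphaNum G) :
    IsSetCover (graphCover G S) := by
  intro v
  by_cases hv : v ∈ S
  · exact ⟨closedNbhd G v, Finset.mem_image_of_mem _ hv, mem_closedNbhd_self v⟩
  · by_contra hcon
    push_neg at hcon
    -- v is adjacent to no vertex of S, so insert v S is stable
    have hnadj : ∀ s ∈ S, ¬ G.Adj s v := by
      intro s hs hadj
      exact hcon (closedNbhd G s) (Finset.mem_image_of_mem _ hs)
        (mem_closedNbhd.2 (Or.inr hadj))
    have hstable : IsStableSet G ((insert v S : Finset V) : Set V) := by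
      intro a ha b hb hne hadj
      simp only [Finset.coe_insert, Set.mem_insert_iff, Finset.mem_coe] at ha hb
      rcases ha with rfl | ha
      · rcases hb with rfl | hb
        · exact hne rfl
        · exact hnadj b hb hadj.symm
      · rcases hb with rfl | hb
        · exact hnadj a ha hadj
        · exact h.2.2.2 (by exact_mod_cast ha) (by exact_mod_cast hb) hne hadj
    have := stable_card_le_alpha hstable
    rw [Finset.card_insert_of_notMem hv, hmax] at this
    omega

lemma graphCover_isMinimal {G : SimpleGraph V} {K S : Finset V}
    (h : IsKSPartition G K S) :
    IsMinimalCover (graphCover G S) := by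
  intro A hA hsub
  obtain ⟨s, hs, rfl⟩ := Finset.mem_image.1 hA
  have hmem := hsub (mem_closedNbhd_self s)
  rw [Finset.mem_sup] at hmem
  obtain ⟨B, hB, hsB⟩ := hmem
  have hB' := Finset.mem_erase.1 hB
  obtain ⟨t, ht, rfl⟩ := Finset.mem_image.1 hB'.2
  have : s = t := stable_mem_closedNbhd h.2.2.2 ht hs hsB
  exact hB'.1 (by rw [this])

lemma graphCover_transversal {G : SimpleGraph V} {K S : Finset V}
    (h : IsKSPartition G K S) : IsTransversal (graphCover G S) S := by
  constructor
  · intro s hs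
    refine ⟨closedNbhd G s, ⟨Finset.mem_image_of_mem _ hs, mem_closedNbhd_self s⟩, ?_⟩
    rintro B ⟨hB, hsB⟩
    obtain ⟨t, ht, rfl⟩ := Finset.mem_image.1 hB
    rw [stable_mem_closedNbhd h.2.2.2 ht hs hsB]
  · intro A hA
    obtain ⟨s, hs, rfl⟩ := Finset.mem_image.1 hA
    refine ⟨s, ⟨hs, mem_closedNbhd_self s⟩, ?_⟩
    rintro t ⟨htS, ht⟩
    exact stable_mem_closedNbhd h.2.2.2 hs htS ht

lemma reconstruction {G : SimpleGraph V} {K S : Finset V} (h : IsKSPartition G K S) :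
    coverGraph (graphCover G S) S = G := by
  have hK := ks_K_eq h
  ext u v
  rw [coverGraph_adj]
  constructor
  · rintro ⟨hne, ⟨A, hA, huA, hvA⟩ | ⟨hu, hv⟩⟩
    · obtain ⟨s, hs, rfl⟩ := Finset.mem_image.1 hA
      rcases mem_closedNbhd.1 huA with rfl | hu'
      · rcases mem_closedNbhd.1 hvA with rfl | hv'
        · exact absurd rfl hne
        · exact hv'
      · rcases mem_closedNbhd.1 hvA with rfl | hv'
        · exact hu'.symm
        · -- u, v both neighbors of s; then u, v ∉ S hence both in K
          have huS : u ∉ S := fun huS => h.2.2.2 (by exact_mod_cast hs)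
            (by exact_mod_cast huS) (G.ne_of_adj hu') hu'
          have hvS : v ∉ S := fun hvS => h.2.2.2 (by exact_mod_cast hs)
            (by exact_mod_cast hvS) (G.ne_of_adj hv') hv'
          have huK : u ∈ K := by rw [hK]; simp [huS]
          have hvK : v ∈ K := by rw [hK]; simp [hvS]
          exact h.2.2.1 (by exact_mod_cast huK) (by exact_mod_cast hvK) hne
    · have huK : u ∈ K := by rw [hK]; simp [hu]
      have hvK : v ∈ K := by rw [hK]; simp [hv]
      exact h.2.2.1 (by exact_mod_cast huK) (by exact_mod_cast hvK) hne
  · intro hadj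
    refine ⟨G.ne_of_adj hadj, ?_⟩
    by_cases hu : u ∈ S
    · exact Or.inl ⟨closedNbhd G u, Finset.mem_image_of_mem _ hu,
        mem_closedNbhd_self u, mem_closedNbhd.2 (Or.inr hadj)⟩
    · by_cases hv : v ∈ S
      · exact Or.inl ⟨closedNbhd G v, Finset.mem_image_of_mem _ hv,
          mem_closedNbhd.2 (Or.inr hadj.symm), mem_closedNbhd_self v⟩
      · exact Or.inr ⟨hu, hv⟩


lemma mem_image_perm {σ : Equiv.Perm V} {A : Finset V} {v : V} :
    v ∈ A.image σ ↔ σ.symm v ∈ A := by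
  rw [Finset.mem_image]
  constructor
  · rintro ⟨a, ha, rfl⟩; simpa using ha
  · intro h; exact ⟨σ.symm v, h, by simp⟩

lemma closedNbhd_map {W : Type*} [Fintype W] [DecidableEq W] {G : SimpleGraph V}
    {H : SimpleGraph W} (φ : G ≃g H) (s : V) :
    closedNbhd H (φ s) = (closedNbhd G s).image φ := by
  ext v
  rw [mem_closedNbhd, Finset.mem_image]
  constructor
  · rintro (rfl | hadj)
    · exact ⟨s, mem_closedNbhd_self s, rfl⟩
    · refine ⟨φ.symm v, mem_closedNbhd.2 (Or.inr ?_), by simp⟩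
      have : H.Adj (φ s) (φ (φ.symm v)) := by simpa using hadj
      exact φ.map_adj_iff.1 this
  · rintro ⟨a, ha, rfl⟩
    rcases mem_closedNbhd.1 ha with rfl | hadj
    · exact Or.inl rfl
    · exact Or.inr (φ.map_adj_iff.2 hadj)

lemma stable_image {W : Type*} [Fintype W] [DecidableEq W] {G : SimpleGraph V}
    {H : SimpleGraph W} (φ : G ≃g H) {T : Finset V} (hT : IsStableSet G (T : Set V)) :
    IsStableSet H ((T.image φ : Finset W) : Set W) := by
  rintro a ha b hb hne hadj
  simp only [Finset.coe_image, Set.mem_image, Finset.mem_coe] at ha hb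
  obtain ⟨x, hx, rfl⟩ := ha
  obtain ⟨y, hy, rfl⟩ := hb
  exact hT (by exact_mod_cast hx) (by exact_mod_cast hy)
    (fun h => hne (by rw [h])) (φ.map_adj_iff.1 hadj)

lemma alpha_le_iso {W : Type*} [Fintype W] [DecidableEq W] {G : SimpleGraph V}
    {H : SimpleGraph W} (φ : G ≃g H) : alphaNum G ≤ alphaNum H := by
  refine alpha_le fun T hT => ?_
  have := stable_card_le_alpha (stable_image φ hT)
  rwa [show (T.image φ).card = T.card from
    Finset.card_image_of_injective T φ.toEquiv.injective] at this

lemma alpha_iso {W : Type*} [Fintype W] [DecidableEq W] {G : SimpleGraph V}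
    {H : SimpleGraph W} (φ : G ≃g H) : alphaNum G = alphaNum H :=
  le_antisymm (alpha_le_iso φ) (alpha_le_iso φ.symm)

lemma partition_image {W : Type*} [Fintype W] [DecidableEq W] {G : SimpleGraph V}
    {H : SimpleGraph W} (φ : G ≃g H) {K S : Finset V} (h : IsKSPartition G K S) :
    IsKSPartition H (K.image φ) (S.image φ) := by
  obtain ⟨hdisj, hunion, hclique, hstable⟩ := h
  refine ⟨?_, ?_, ?_, stable_image φ hstable⟩
  · exact (Finset.disjoint_image φ.toEquiv.injective).2 hdisj
  · rw [← Finset.image_union, hunion]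
    ext w
    simp only [Finset.mem_image, Finset.mem_univ, iff_true]
    exact ⟨φ.symm w, by simp⟩
  · rintro a ha b hb hne
    simp only [Finset.coe_image, Set.mem_image, Finset.mem_coe] at ha hb
    obtain ⟨x, hx, rfl⟩ := ha
    obtain ⟨y, hy, rfl⟩ := hb
    exact φ.map_adj_iff.2 (hclique (by exact_mod_cast hx) (by exact_mod_cast hy)
      (fun h => hne (by rw [h])))

lemma graphCover_map {W : Type*} [Fintype W] [DecidableEq W] {G : SimpleGraph V}
    {H : SimpleGraph W} (φ : G ≃g H) (S : Finset V) :
    graphCover H (S.image φ) = (graphCover G S).image (fun A => A.image φ) := by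
  unfold graphCover
  rw [Finset.image_image, Finset.image_image]
  exact Finset.image_congr fun s _ => closedNbhd_map φ s

lemma exists_smax {G : SimpleGraph V} (h : IsSplit G) :
    ∃ S : Finset V, IsKSPartition G (Finset.univ \ S) S ∧ S.card = alphaNum G := by
  obtain ⟨K, S, hKS⟩ := h
  have hK := ks_K_eq hKS
  subst hK
  obtain ⟨T, hTst, hTcard⟩ := exists_max_stable G
  by_cases hc : T.card ≤ S.card
  · exact ⟨S, hKS, le_antisymm (stable_card_le_alpha hKS.2.2.2) (by rw [← hTcard]; exact hc)⟩
  · push_neg at hc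
    have hTS : (T \ S).card ≤ 1 := by
      have : T \ S = T ∩ (Finset.univ \ S) := by
        ext v; simp [Finset.mem_sdiff, Finset.mem_inter]
      rw [this]
      exact stable_inter_clique hTst hKS.2.2.1
    have hsub : S ⊆ T := by
      have h1 : S.card ≤ (T ∩ S).card := by
        have := Finset.card_sdiff_add_card_inter T S
        omega
      have := Finset.eq_of_subset_of_card_le (Finset.inter_subset_right : T ∩ S ⊆ S) h1
      rw [← this]
      exact Finset.inter_subset_left
    refine ⟨T, ⟨Finset.sdiff_disjoint, Finset.sdiff_union_of_subset (Finset.subset_univ T),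
      ?_, hTst⟩, hTcard⟩
    have hsub2 : (Finset.univ \ T : Finset V) ⊆ Finset.univ \ S :=
      Finset.sdiff_subset_sdiff (le_refl _) hsub
    exact hKS.2.2.1.subset (by exact_mod_cast hsub2)


lemma swap_mem_iff {s s' v : V} {A : Finset V} (h1 : (s ∈ A ↔ s' ∈ A)) :
    Equiv.swap s s' v ∈ A ↔ v ∈ A := by
  rcases eq_or_ne v s with rfl | hvs
  · rw [Equiv.swap_apply_left]; exact h1.symm
  rcases eq_or_ne v s' with rfl | hvs'
  · rw [Equiv.swap_apply_right]; exact h1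
  · rw [Equiv.swap_apply_of_ne_of_ne hvs hvs']

lemma image_swap_eq_of_iff {s s' : V} {A B : Finset V} (hAB : ∀ v, v ∈ B ↔ Equiv.swap s s' v ∈ A) :
    A.image (Equiv.swap s s') = B := by
  ext v
  rw [mem_image_perm, Equiv.symm_swap, hAB v]

lemma image_swap_of_iff {s s' : V} {A : Finset V} (h1 : (s ∈ A ↔ s' ∈ A)) :
    A.image (Equiv.swap s s') = A :=
  image_swap_eq_of_iff fun v => (swap_mem_iff h1).symm

lemma cover_unique {G : SimpleGraph V} {S S' : Finset V}
    (h : IsKSPartition G (Finset.univ \ S) S) (h' : IsKSPartition G (Finset.univ \ S') S')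
    (hc : S.card = alphaNum G) (hc' : S'.card = alphaNum G) :
    ∃ σ : Equiv.Perm V, (graphCover G S).image (fun A => A.image σ) = graphCover G S' := by
  by_cases heq : S = S'
  · subst heq
    exact ⟨1, by simp⟩
  have hcard : S.card = S'.card := by rw [hc, hc']
  have hd1 : (S \ S').card ≤ 1 := by
    have e : S \ S' = S ∩ (Finset.univ \ S') := by ext v; simp
    rw [e]; exact stable_inter_clique h.2.2.2 h'.2.2.1
  have hne1 : (S \ S').card ≠ 0 := by
    intro h0
    rw [Finset.card_eq_zero, Finset.sdiff_eq_empty_iff_subset] at h0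
    exact heq (Finset.eq_of_subset_of_card_le h0 (le_of_eq hcard.symm))
  have e1 := Finset.card_sdiff_add_card_inter S S'
  have e2 := Finset.card_sdiff_add_card_inter S' S
  rw [Finset.inter_comm] at e2
  obtain ⟨s, hs⟩ := Finset.card_eq_one.1 (by omega : (S \ S').card = 1)
  obtain ⟨s', hs'⟩ := Finset.card_eq_one.1 (by omega : (S' \ S).card = 1)
  have hsmem : s ∈ S ∧ s ∉ S' := by
    have : s ∈ S \ S' := by rw [hs]; exact Finset.mem_singleton_self s
    exact Finset.mem_sdiff.1 this
  have hsmem' : s' ∈ S' ∧ s' ∉ S := by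
    have : s' ∈ S' \ S := by rw [hs']; exact Finset.mem_singleton_self s'
    exact Finset.mem_sdiff.1 this
  have hss' : s ≠ s' := fun hh => hsmem.2 (hh ▸ hsmem'.1)
  have hErase : S.erase s = S'.erase s' := by
    ext v
    simp only [Finset.mem_erase]
    constructor
    · rintro ⟨hvs, hvS⟩
      have hvS' : v ∈ S' := by
        by_contra hv
        have : v ∈ S \ S' := Finset.mem_sdiff.2 ⟨hvS, hv⟩
        rw [hs, Finset.mem_singleton] at this
        exact hvs this
      exact ⟨fun hh => hsmem'.2 (hh ▸ hvS), hvS'⟩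
    · rintro ⟨hvs', hvS'⟩
      have hvS : v ∈ S := by
        by_contra hv
        have : v ∈ S' \ S := Finset.mem_sdiff.2 ⟨hvS', hv⟩
        rw [hs', Finset.mem_singleton] at this
        exact hvs' this
      exact ⟨fun hh => hsmem.2 (hh ▸ hvS'), hvS⟩
  -- characterizations of the two closed neighborhoods
  have hclique' : ∀ u w : V, u ∉ S' → w ∉ S' → u ≠ w → G.Adj u w := fun u w hu hw hne =>
    h'.2.2.1 (by simp [hu]) (by simp [hw]) hne
  have hclique : ∀ u w : V, u ∉ S → w ∉ S → u ≠ w → G.Adj u w := fun u w hu hw hne =>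
    h.2.2.1 (by simp [hu]) (by simp [hw]) hne
  have hstS : ∀ u w : V, u ∈ S → w ∈ S → G.Adj u w → False := fun u w hu hw hadj =>
    h.2.2.2 (by exact_mod_cast hu) (by exact_mod_cast hw) (G.ne_of_adj hadj) hadj
  have hstS' : ∀ u w : V, u ∈ S' → w ∈ S' → G.Adj u w → False := fun u w hu hw hadj =>
    h'.2.2.2 (by exact_mod_cast hu) (by exact_mod_cast hw) (G.ne_of_adj hadj) hadj
  have hS'ins : S' = insert s' (S.erase s) := by
    rw [hErase, Finset.insert_erase hsmem'.1]
  have hSins : S = insert s (S.erase s) := by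
    rw [Finset.insert_erase hsmem.1]
  have hmemS' : ∀ v, v ≠ s' → v ∉ S → v ∉ S' := by
    intro v hvs' hvS
    rw [hS'ins, Finset.mem_insert]
    rintro (rfl | hmem)
    · exact hvs' rfl
    · exact hvS (Finset.mem_of_mem_erase hmem)
  have hmemS : ∀ v, v ≠ s → v ∉ S' → v ∉ S := by
    intro v hvs hvS' hvS
    exact hvS' (Finset.mem_of_mem_erase (hErase ▸ Finset.mem_erase.2 ⟨hvs, hvS⟩))
  -- the key step: the swap carries N[s] to N[s'] and fixes the other neighborhoods
  have key : ∀ t ∈ S, (closedNbhd G t).image (Equiv.swap s s') = closedNbhd G (Equiv.swap s s' t) := by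
    intro t ht
    rcases eq_or_ne t s with rfl | hts
    · rw [Equiv.swap_apply_left]
      by_cases hadj : G.Adj t s'
      · -- N[s] = N[s'] = univ \ (S.erase s), stable under the swap
        have hNs : closedNbhd G t = Finset.univ \ S.erase t := by
          ext v
          rw [mem_closedNbhd]
          simp only [Finset.mem_sdiff, Finset.mem_univ, true_and, Finset.mem_erase, not_and]
          constructor
          · rintro (rfl | hv)
            · intro hvs; exact absurd rfl hvs
            · intro _ hvS; exact hstS t v hsmem.1 hvS hv
          · intro hv
            rcases eq_or_ne v t with rfl | hvs
            · exact Or.inl rfl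
            · have hvS : v ∉ S := hv hvs
              rcases eq_or_ne v s' with rfl | hvs'
              · exact Or.inr hadj
              · exact Or.inr (hclique' t v hsmem.2 (hmemS' v hvs' hvS) (Ne.symm hvs))
        have hNs' : closedNbhd G s' = Finset.univ \ S'.erase s' := by
          ext v
          rw [mem_closedNbhd]
          simp only [Finset.mem_sdiff, Finset.mem_univ, true_and, Finset.mem_erase, not_and]
          constructor
          · rintro (rfl | hv)
            · intro hvs; exact absurd rfl hvs
            · intro _ hvS'; exact hstS' s' v hsmem'.1 hvS' hv
          · intro hv
            rcases eq_or_ne v s' with rfl | hvs'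
            · exact Or.inl rfl
            · have hvS' : v ∉ S' := hv hvs'
              rcases eq_or_ne v t with rfl | hvs
              · exact Or.inr hadj.symm
              · exact Or.inr (hclique s' v hsmem'.2 (hmemS v hvs hvS') (Ne.symm hvs'))
        rw [hNs, hNs', ← hErase]
        refine image_swap_of_iff ?_
        simp [hss', hsmem'.2]
      · -- N[s] = univ \ S', N[s'] = univ \ S, swapped by the swap
        have hNs : closedNbhd G t = Finset.univ \ S' := by
          ext v
          rw [mem_closedNbhd]
          simp only [Finset.mem_sdiff, Finset.mem_univ, true_and]
          constructor
          · rintro (rfl | hv)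
            · exact hsmem.2
            · intro hvS'
              rcases eq_or_ne v s' with rfl | hvs'
              · exact hadj hv
              · have : v ∈ S := by
                  rw [hSins, hErase, Finset.mem_insert]
                  exact Or.inr (Finset.mem_erase.2 ⟨hvs', hvS'⟩)
                exact hstS t v hsmem.1 this hv
          · intro hvS'
            rcases eq_or_ne v t with rfl | hvs
            · exact Or.inl rfl
            · exact Or.inr (hclique' t v hsmem.2 hvS' (Ne.symm hvs))
        have hNs' : closedNbhd G s' = Finset.univ \ S := by
          ext v
          rw [mem_closedNbhd]
          simp only [Finset.mem_sdiff, Finset.mem_univ, true_and]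
          constructor
          · rintro (rfl | hv)
            · exact hsmem'.2
            · intro hvS
              rcases eq_or_ne v t with rfl | hvs
              · exact hadj hv.symm
              · have : v ∈ S' := by
                  rw [hS'ins, Finset.mem_insert]
                  exact Or.inr (Finset.mem_erase.2 ⟨hvs, hvS⟩)
                exact hstS' s' v hsmem'.1 this hv
          · intro hvS
            rcases eq_or_ne v s' with rfl | hvs'
            · exact Or.inl rfl
            · exact Or.inr (hclique s' v hsmem'.2 hvS (Ne.symm hvs'))
        rw [hNs, hNs']
        refine image_swap_eq_of_iff fun v => ?_
        simp only [Finset.mem_sdiff, Finset.mem_univ, true_and]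
        rcases eq_or_ne v t with rfl | hvs
        · rw [Equiv.swap_apply_left]
          simp [hsmem.1, hsmem'.1]
        rcases eq_or_ne v s' with rfl | hvs'
        · rw [Equiv.swap_apply_right]
          simp [hsmem.2, hsmem'.2]
        · rw [Equiv.swap_apply_of_ne_of_ne hvs hvs']
          constructor
          · exact fun hvS => hmemS' v hvs' hvS
          · exact fun hvS' => hmemS v hvs hvS'
    · -- t ∈ S ∩ S' : its neighborhood avoids both s and s'
      have htS' : t ∈ S' := by
        rw [hS'ins, Finset.mem_insert]
        exact Or.inr (Finset.mem_erase.2 ⟨hts, ht⟩)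
      have hts' : t ≠ s' := fun hh => hsmem'.2 (hh ▸ ht)
      rw [Equiv.swap_apply_of_ne_of_ne hts hts']
      refine image_swap_of_iff ?_
      have h1 : s ∉ closedNbhd G t := by
        rw [mem_closedNbhd]
        rintro (rfl | hv)
        · exact hts rfl
        · exact hstS t s ht hsmem.1 hv
      have h2 : s' ∉ closedNbhd G t := by
        rw [mem_closedNbhd]
        rintro (rfl | hv)
        · exact hts' rfl
        · exact hstS' t s' htS' hsmem'.1 hv
      simp [h1, h2]
  -- assemble
  refine ⟨Equiv.swap s s', ?_⟩
  unfold graphCover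
  rw [Finset.image_image]
  have hcg : Finset.image ((fun A => Finset.image (⇑(Equiv.swap s s')) A) ∘ closedNbhd G) S
      = Finset.image (closedNbhd G ∘ (Equiv.swap s s')) S :=
    Finset.image_congr fun t ht => key t ht
  rw [hcg, ← Finset.image_image]
  congr 1
  -- (swap s s') '' S = S'
  refine image_swap_eq_of_iff fun v => ?_
  rcases eq_or_ne v s with rfl | hvs
  · rw [Equiv.swap_apply_left]
    simp [hsmem.2, hsmem'.2]
  rcases eq_or_ne v s' with rfl | hvs'
  · rw [Equiv.swap_apply_right]
    simp [hsmem.1, hsmem'.1]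
  · rw [Equiv.swap_apply_of_ne_of_ne hvs hvs']
    constructor
    · intro hvS'
      by_contra hvS
      exact (hmemS' v hvs' hvS) hvS'
    · intro hvS
      by_contra hvS'
      exact (hmemS v hvs hvS') hvS


/-- an isomorphism of cover graphs from a permutation compatible with memberships. -/
def coverGraphIsoOfCompat (τ : Equiv.Perm V) (C : Finset (Finset V)) (S S' : Finset V)
    (hmem : ∀ u : V, ∀ B ∈ C, τ u ∈ B ↔ u ∈ B) (hS : ∀ u : V, τ u ∈ S' ↔ u ∈ S) :
    coverGraph C S ≃g coverGraph C S' where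
  toEquiv := τ
  map_rel_iff' := by
    intro u v
    simp only [Equiv.toFun_as_coe, coverGraph_adj]
    constructor
    · rintro ⟨hne, hh⟩
      refine ⟨fun he => hne (he ▸ rfl), ?_⟩
      rcases hh with ⟨B, hB, hu, hv⟩ | ⟨hu, hv⟩
      · exact Or.inl ⟨B, hB, (hmem u B hB).1 hu, (hmem v B hB).1 hv⟩
      · exact Or.inr ⟨fun hc => hu ((hS u).2 hc), fun hc => hv ((hS v).2 hc)⟩
    · rintro ⟨hne, hh⟩
      refine ⟨fun he => hne (τ.injective he), ?_⟩
      rcases hh with ⟨B, hB, hu, hv⟩ | ⟨hu, hv⟩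
      · exact Or.inl ⟨B, hB, (hmem u B hB).2 hu, (hmem v B hB).2 hv⟩
      · exact Or.inr ⟨fun hc => hu ((hS u).1 hc), fun hc => hv ((hS v).1 hc)⟩

lemma transversal_change_aux {C : Finset (Finset V)} :
    ∀ (k : ℕ) (S₁ S₂ : Finset V), (S₁ \ S₂).card = k → IsTransversal C S₁ → IsTransversal C S₂ →
      Nonempty (coverGraph C S₁ ≃g coverGraph C S₂) := by
  intro k
  induction k using Nat.strong_induction_on with
  | _ k ih =>
    intro S₁ S₂ hk h1 h2
    rcases Nat.eq_zero_or_pos k with rfl | hpos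
    · have hsub : S₁ ⊆ S₂ := by
        rw [← Finset.sdiff_eq_empty_iff_subset]
        exact Finset.card_eq_zero.1 hk
      have : S₁ = S₂ := Finset.eq_of_subset_of_card_le hsub
        (by rw [transversal_card h1, transversal_card h2])
      subst this
      exact ⟨RelIso.refl _⟩
    · have hne : (S₁ \ S₂).Nonempty := Finset.card_pos.1 (hk ▸ hpos)
      obtain ⟨s, hs⟩ := hne
      rw [Finset.mem_sdiff] at hs
      -- the unique member A of C containing s
      obtain ⟨A, ⟨hA, hsA⟩, huA⟩ := h1.1 s hs.1
      -- the representative of A in S₂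
      obtain ⟨s', ⟨hs'S₂, hs'A⟩, -⟩ := h2.2 A hA
      have hss' : s ≠ s' := fun hh => hs.2 (hh ▸ hs'S₂)
      have hs'S₁ : s' ∉ S₁ := by
        intro hc
        obtain ⟨t, -, ht⟩ := h1.2 A hA
        exact hss' ((ht s ⟨hs.1, hsA⟩).trans (ht s' ⟨hc, hs'A⟩).symm)
      -- s and s' belong to exactly the same members of C (namely, only A)
      obtain ⟨A', ⟨hA', hs'A'⟩, huA'⟩ := h2.1 s' hs'S₂
      have hAA' : A' = A := (huA' A ⟨hA, hs'A⟩).symm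
      subst hAA'
      have hsame : ∀ B ∈ C, s ∈ B ↔ s' ∈ B := by
        intro B hB
        constructor
        · intro hsB
          have : B = A' := huA B ⟨hB, hsB⟩
          exact this ▸ hs'A'
        · intro hsB
          have : B = A' := huA' B ⟨hB, hsB⟩
          exact this ▸ hsA
      set S₁' : Finset V := insert s' (S₁.erase s) with hS₁'
      have hS₁'mem : ∀ u : V, u ∈ S₁' ↔ (u = s' ∨ (u ∈ S₁ ∧ u ≠ s)) := by
        intro u
        rw [hS₁', Finset.mem_insert, Finset.mem_erase]
        tauto
      have htrans : IsTransversal C S₁' := by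
        constructor
        · intro t ht
          rcases (hS₁'mem t).1 ht with rfl | ⟨htS₁, -⟩
          · exact h2.1 t hs'S₂
          · exact h1.1 t htS₁
        · intro B hB
          by_cases hBA : B = A'
          · subst hBA
            refine ⟨s', ⟨(hS₁'mem s').2 (Or.inl rfl), hs'A⟩, ?_⟩
            rintro u ⟨huS, huB⟩
            rcases (hS₁'mem u).1 huS with rfl | ⟨huS₁, hus⟩
            · rfl
            · obtain ⟨t, -, ht⟩ := h1.2 B hB
              exact absurd ((ht u ⟨huS₁, huB⟩).trans (ht s ⟨hs.1, hsA⟩).symm) hus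
          · obtain ⟨t, ⟨htS₁, htB⟩, htu⟩ := h1.2 B hB
            have hts : t ≠ s := by
              rintro rfl
              exact hBA (huA B ⟨hB, htB⟩)
            refine ⟨t, ⟨(hS₁'mem t).2 (Or.inr ⟨htS₁, hts⟩), htB⟩, ?_⟩
            rintro u ⟨huS, huB⟩
            rcases (hS₁'mem u).1 huS with rfl | ⟨huS₁, -⟩
            · exact absurd (huA' B ⟨hB, huB⟩) hBA
            · exact htu u ⟨huS₁, huB⟩
      have hiso1 : coverGraph C S₁ ≃g coverGraph C S₁' := by
        refine coverGraphIsoOfCompat (Equiv.swap s s') C S₁ S₁' ?_ ?_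
        · intro u B hB
          exact swap_mem_iff (hsame B hB)
        · intro u
          rcases eq_or_ne u s with rfl | hus
          · rw [Equiv.swap_apply_left]
            simp [hS₁'mem, hs.1]
          rcases eq_or_ne u s' with rfl | hus'
          · rw [Equiv.swap_apply_right]
            simp [hS₁'mem, hss', hs'S₁]
          · rw [Equiv.swap_apply_of_ne_of_ne hus hus']
            rw [hS₁'mem u]
            constructor
            · rintro (rfl | ⟨h', -⟩)
              · exact absurd rfl hus'
              · exact h'
            · intro h'
              exact Or.inr ⟨h', hus⟩
      have hmeasure : (S₁' \ S₂).card < k := by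
        have : S₁' \ S₂ = (S₁ \ S₂).erase s := by
          ext u
          rw [Finset.mem_sdiff, hS₁'mem u, Finset.mem_erase, Finset.mem_sdiff]
          constructor
          · rintro ⟨rfl | ⟨h', hus⟩, hu2⟩
            · exact absurd hs'S₂ hu2
            · exact ⟨hus, h', hu2⟩
          · rintro ⟨hus, h', hu2⟩
            exact ⟨Or.inr ⟨h', hus⟩, hu2⟩
        rw [this, ← hk]
        exact Finset.card_erase_lt_of_mem (Finset.mem_sdiff.2 hs)
      obtain ⟨hiso2⟩ := ih _ hmeasure S₁' S₂ rfl htrans h2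
      exact ⟨hiso1.trans hiso2⟩

lemma transversal_change {C : Finset (Finset V)} {S₁ S₂ : Finset V}
    (h1 : IsTransversal C S₁) (h2 : IsTransversal C S₂) :
    Nonempty (coverGraph C S₁ ≃g coverGraph C S₂) :=
  transversal_change_aux _ S₁ S₂ rfl h1 h2


lemma mem_image_perm' {σ : Equiv.Perm V} {A : Finset V} {v : V} :
    σ v ∈ A.image σ ↔ v ∈ A := by
  rw [mem_image_perm, Equiv.symm_apply_apply]

/-- equivariance of the cover graph construction. -/
def coverGraphEquivariant (σ : Equiv.Perm V) (C : Finset (Finset V)) (S : Finset V) :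
    coverGraph C S ≃g coverGraph (C.image fun A => A.image σ) (S.image σ) where
  toEquiv := σ
  map_rel_iff' := by
    intro u v
    simp only [Equiv.toFun_as_coe, coverGraph_adj]
    constructor
    · rintro ⟨hne, hh⟩
      refine ⟨fun he => hne (he ▸ rfl), ?_⟩
      rcases hh with ⟨A', hA', hu, hv⟩ | ⟨hu, hv⟩
      · obtain ⟨A, hA, rfl⟩ := Finset.mem_image.1 hA'
        exact Or.inl ⟨A, hA, mem_image_perm'.1 hu, mem_image_perm'.1 hv⟩
      · exact Or.inr ⟨fun hc => hu (mem_image_perm'.2 hc), fun hc => hv (mem_image_perm'.2 hc)⟩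
    · rintro ⟨hne, hh⟩
      refine ⟨fun he => hne (σ.injective he), ?_⟩
      rcases hh with ⟨A, hA, hu, hv⟩ | ⟨hu, hv⟩
      · exact Or.inl ⟨A.image σ, Finset.mem_image_of_mem _ hA,
          mem_image_perm'.2 hu, mem_image_perm'.2 hv⟩
      · exact Or.inr ⟨fun hc => hu (mem_image_perm'.1 hc), fun hc => hv (mem_image_perm'.1 hc)⟩

lemma transversal_map (σ : Equiv.Perm V) {C : Finset (Finset V)} {S : Finset V}
    (h : IsTransversal C S) : IsTransversal (C.image fun A => A.image σ) (S.image σ) := by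
  constructor
  · intro t ht
    obtain ⟨s, hsS, rfl⟩ := Finset.mem_image.1 ht
    obtain ⟨A, ⟨hA, hsA⟩, huA⟩ := h.1 s hsS
    refine ⟨A.image σ, ⟨Finset.mem_image_of_mem _ hA, mem_image_perm'.2 hsA⟩, ?_⟩
    rintro B' ⟨hB', hsB'⟩
    obtain ⟨B, hB, rfl⟩ := Finset.mem_image.1 hB'
    rw [huA B ⟨hB, mem_image_perm'.1 hsB'⟩]
  · intro A' hA'
    obtain ⟨A, hA, rfl⟩ := Finset.mem_image.1 hA'
    obtain ⟨t, ⟨htS, htA⟩, htu⟩ := h.2 A hA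
    refine ⟨σ t, ⟨Finset.mem_image_of_mem _ htS, mem_image_perm'.2 htA⟩, ?_⟩
    rintro u ⟨huS, huA⟩
    obtain ⟨u', hu'S, rfl⟩ := Finset.mem_image.1 huS
    rw [htu u' ⟨hu'S, mem_image_perm'.1 huA⟩]

noncomputable def chooseS (G : SimpleGraph V) (h : IsSplit G) : Finset V :=
  (exists_smax h).choose

lemma chooseS_spec (G : SimpleGraph V) (h : IsSplit G) :
    IsKSPartition G (Finset.univ \ chooseS G h) (chooseS G h) ∧
      (chooseS G h).card = alphaNum G :=
  (exists_smax h).choose_spec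

noncomputable def chooseT (C : Finset (Finset V)) (hC : IsSetCover C) (hm : IsMinimalCover C) :
    Finset V :=
  (exists_transversal hC hm).choose

lemma chooseT_spec (C : Finset (Finset V)) (hC : IsSetCover C) (hm : IsMinimalCover C) :
    IsTransversal C (chooseT C hC hm) :=
  (exists_transversal hC hm).choose_spec

noncomputable def toCover {n : ℕ} (G : {G : SimpleGraph (Fin n) // IsSplit G}) :
    {C : Finset (Finset (Fin n)) // IsSetCover C ∧ IsMinimalCover C} :=
  ⟨graphCover G.1 (chooseS G.1 G.2),
   graphCover_isSetCover (chooseS_spec G.1 G.2).1 (chooseS_spec G.1 G.2).2,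
   graphCover_isMinimal (chooseS_spec G.1 G.2).1⟩

noncomputable def toGraph {n : ℕ}
    (C : {C : Finset (Finset (Fin n)) // IsSetCover C ∧ IsMinimalCover C}) :
    {G : SimpleGraph (Fin n) // IsSplit G} :=
  ⟨coverGraph C.1 (chooseT C.1 C.2.1 C.2.2),
   _, _, coverGraph_partition (chooseT_spec C.1 C.2.1 C.2.2)⟩

lemma toCover_wd {n : ℕ} (G H : {G : SimpleGraph (Fin n) // IsSplit G})
    (h : SplitIsoRel n G H) : CoverIsoRel n (toCover G) (toCover H) := by
  obtain ⟨φ⟩ := h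
  obtain ⟨hG1, hG2⟩ := chooseS_spec G.1 G.2
  obtain ⟨hH1, hH2⟩ := chooseS_spec H.1 H.2
  set S := chooseS G.1 G.2
  have h1 := partition_image φ hG1
  have h1' : IsKSPartition H.1 (Finset.univ \ (S.image φ)) (S.image φ) := by
    rwa [ks_K_eq h1] at h1
  have hcard : (S.image φ).card = alphaNum H.1 := by
    rw [show (S.image ⇑φ).card = S.card from Finset.card_image_of_injective S φ.toEquiv.injective,
      hG2, alpha_iso φ]
  obtain ⟨τ, hτ⟩ := cover_unique h1' hH1 hcard hH2
  refine ⟨φ.toEquiv.trans τ, ?_⟩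
  have hmap := graphCover_map φ S
  show (graphCover G.1 S).image (fun A => A.image (φ.toEquiv.trans τ)) = _
  have hfun : (fun A : Finset (Fin n) => A.image (φ.toEquiv.trans τ)) =
      ((fun A : Finset (Fin n) => A.image τ) ∘ (fun A : Finset (Fin n) => A.image φ)) := by
    funext A
    show A.image (φ.toEquiv.trans τ) = (A.image φ).image τ
    ext v
    simp only [Finset.mem_image, Equiv.trans_apply]
    constructor
    · rintro ⟨a, ha, rfl⟩
      exact ⟨φ a, ⟨a, ha, rfl⟩, rfl⟩
    · rintro ⟨b, ⟨a, ha, rfl⟩, rfl⟩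
      exact ⟨a, ha, rfl⟩
  rw [hfun, ← Finset.image_image, ← hmap, hτ]
  rfl

lemma toGraph_wd {n : ℕ} (C D : {C : Finset (Finset (Fin n)) // IsSetCover C ∧ IsMinimalCover C})
    (h : CoverIsoRel n C D) : SplitIsoRel n (toGraph C) (toGraph D) := by
  obtain ⟨σ, hσ⟩ := h
  have hTC := chooseT_spec C.1 C.2.1 C.2.2
  have hTD := chooseT_spec D.1 D.2.1 D.2.2
  set TC := chooseT C.1 C.2.1 C.2.2
  have iso1 := coverGraphEquivariant σ C.1 TC
  rw [hσ] at iso1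
  have htrans : IsTransversal D.1 (TC.image σ) := by
    have := transversal_map σ hTC
    rwa [hσ] at this
  obtain ⟨iso2⟩ := transversal_change htrans hTD
  exact ⟨iso1.trans iso2⟩

noncomputable def theEquiv (n : ℕ) : Quot (SplitIsoRel n) ≃ Quot (CoverIsoRel n) where
  toFun := Quot.lift (fun G => Quot.mk _ (toCover G)) fun a b h => Quot.sound (toCover_wd a b h)
  invFun := Quot.lift (fun C => Quot.mk _ (toGraph C)) fun a b h => Quot.sound (toGraph_wd a b h)
  left_inv := by
    refine Quot.ind fun G => ?_
    show Quot.mk _ (toGraph (toCover G)) = Quot.mk _ G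
    apply Quot.sound
    obtain ⟨hG1, hG2⟩ := chooseS_spec G.1 G.2
    set S := chooseS G.1 G.2
    have hSt : IsTransversal (graphCover G.1 S) S := graphCover_transversal hG1
    obtain ⟨ψ⟩ := transversal_change
      (chooseT_spec (toCover G).1 (toCover G).2.1 (toCover G).2.2) hSt
    have he : coverGraph ((toCover G).1) S = G.1 := reconstruction hG1
    rw [he] at ψ
    exact ⟨ψ⟩
  right_inv := by
    refine Quot.ind fun C => ?_
    show Quot.mk _ (toCover (toGraph C)) = Quot.mk _ C
    apply Quot.sound
    have hTC := chooseT_spec C.1 C.2.1 C.2.2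
    set TC := chooseT C.1 C.2.1 C.2.2
    set Gr := coverGraph C.1 TC
    obtain ⟨hS1, hS2⟩ := chooseS_spec Gr (toGraph C).2
    have hpartT : IsKSPartition Gr (Finset.univ \ TC) TC := coverGraph_partition hTC
    have hcardT : TC.card = alphaNum Gr := coverGraph_alpha C.2.1 hTC
    obtain ⟨τ, hτ⟩ := cover_unique hS1 hpartT hS2 hcardT
    exact ⟨τ, by rw [show (toCover (toGraph C)).1 = graphCover Gr (chooseS Gr (toGraph C).2) from rfl, hτ, coverGraph_cover hTC]⟩

/-- Royle's bijection between split graphs and minimal set covers: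
(1) every minimal set cover of an `n`-set gives rise to a split graph on the same
ground set with an S-max KS-partition, where `S` is a choice of one loyal vertex
from each member, `K` is the complement, and `u v` are adjacent iff they lie together
in a member of `C` or both lie in `K`;
(2) conversely, from a split graph with an S-max KS-partition, the closed neighborhoods
of the vertices of `S` form a minimal set cover;
(3) these constructions give a bijection between isomorphism classes of split graphs
on `n` vertices and isomorphism classes of minimal set covers of an `n`-set. -/
theorem royle_bijection (n : ℕ) :
    (∀ C : Finset (Finset (Fin n)), IsSetCover C → IsMinimalCover C →
      ∃ (G : SimpleGraph (Fin n)) (K S : Finset (Fin n)),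
        IsKSPartition G K S ∧ S.card = alphaNum G ∧ K = Finset.univ \ S ∧
        (∀ s ∈ S, Loyal C s) ∧ (∀ A ∈ C, ∃! s, s ∈ S ∧ s ∈ A) ∧
        (∀ u v : Fin n, G.Adj u v ↔
          u ≠ v ∧ ((∃ A ∈ C, u ∈ A ∧ v ∈ A) ∨ (u ∈ K ∧ v ∈ K)))) ∧
    (∀ (G : SimpleGraph (Fin n)) (K S : Finset (Fin n)),
      IsKSPartition G K S → S.card = alphaNum G →
      IsSetCover (S.image fun s => insert s (Finset.univ.filter fun v => G.Adj s v)) ∧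
      IsMinimalCover (S.image fun s => insert s (Finset.univ.filter fun v => G.Adj s v))) ∧
    Nonempty (Quot (SplitIsoRel n) ≃ Quot (CoverIsoRel n)) := by
  refine ⟨?_, ?_, ⟨theEquiv n⟩⟩
  · intro C hC hm
    obtain ⟨S, hS⟩ := exists_transversal hC hm
    refine ⟨coverGraph C S, Finset.univ \ S, S, coverGraph_partition hS,
      coverGraph_alpha hC hS, rfl, hS.1, hS.2, ?_⟩
    intro u v
    rw [coverGraph_adj]
    simp [Finset.mem_sdiff]
  · intro G K S h hmax
    exact ⟨graphCover_isSetCover h hmax, graphCover_isMinimal h⟩
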